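/- The group G = ⟨a, b, t | t⁻¹at = b, t⁻¹bt = aba⁻¹⟩ contains a subgroup that is locally free but not free. -/

import Mathlib

/-- Generators: `0 = a`, `1 = b`, `2 = t`.  Relations of
`⟨a, b, t | t⁻¹at = b, t⁻¹bt = aba⁻¹⟩`. -/
def grels : Set (FreeGroup (Fin 3)) :=
  {(FreeGroup.of 2)⁻¹ * FreeGroup.of 0 * FreeGroup.of 2 * (FreeGroup.of 1)⁻¹,
   (FreeGroup.of 2)⁻¹ * FreeGroup.of 1 * FreeGroup.of 2 *
     (FreeGroup.of 0 * FreeGroup.of 1 * (FreeGroup.of 0)⁻¹)⁻¹}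

abbrev KK := FreeGroup (Fin 2)



-- basic word lemmas
lemma toWord_sing_mul (x : Fin 2 × Bool) (w : KK) :
    (FreeGroup.mk [x] * w).toWord = FreeGroup.reduce (x :: w.toWord) := by
  conv_lhs => rw [← FreeGroup.mk_toWord (x := w)]
  rw [FreeGroup.mul_mk, FreeGroup.toWord_mk]
  rfl

lemma cons_nocancel (x : Fin 2 × Bool) (w : KK)
    (h : ∀ l, w.toWord ≠ (x.1, !x.2) :: l) :
    (FreeGroup.mk [x] * w).toWord = x :: w.toWord := by
  rw [toWord_sing_mul, FreeGroup.reduce.cons, FreeGroup.reduce_toWord]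
  cases hw : w.toWord with
  | nil => rfl
  | cons hd tl =>
    simp only []
    rw [if_neg]
    rintro ⟨h1, h2⟩
    exact h tl (by rw [hw]; congr 1; cases hd; cases x; simp_all)

lemma cons_cancel (x : Fin 2 × Bool) (w : KK) (l : List (Fin 2 × Bool))
    (h : w.toWord = (x.1, !x.2) :: l) :
    (FreeGroup.mk [x] * w).toWord = l := by
  rw [toWord_sing_mul, FreeGroup.reduce.cons, FreeGroup.reduce_toWord, h]
  simp

-- the endomorphism a ↦ b, b ↦ aba⁻¹
def psf : Fin 2 → KK := ![FreeGroup.of 1, FreeGroup.of 0 * FreeGroup.of 1 * (FreeGroup.of 0)⁻¹]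

lemma of_eq_mk (x : Fin 2) : (FreeGroup.of x : KK) = FreeGroup.mk [(x, true)] := rfl
lemma inv_of_eq_mk (x : Fin 2) : (FreeGroup.of x : KK)⁻¹ = FreeGroup.mk [(x, false)] := rfl

def XX : Fin 2 → Set KK :=
  ![{w | ∃ l, w.toWord = (1, true) :: l}, {w | ∃ l, w.toWord = (0, true) :: (1, true) :: l}]
def YY : Fin 2 → Set KK :=
  ![{w | ∃ l, w.toWord = (1, false) :: l}, {w | ∃ l, w.toWord = (0, true) :: (1, false) :: l}]

lemma triple_mul (x y z : Fin 2 × Bool) (w : KK) :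
    FreeGroup.mk [x, y, z] * w
      = FreeGroup.mk [x] * (FreeGroup.mk [y] * (FreeGroup.mk [z] * w)) := by
  have h : (FreeGroup.mk [x, y, z] : KK) = FreeGroup.mk [x] * FreeGroup.mk [y] * FreeGroup.mk [z] := by
    rw [FreeGroup.mul_mk, FreeGroup.mul_mk]; simp
  rw [h]
  group

lemma triple_step (c : Bool) (w : KK)
    (hw : ¬ ∃ l, w.toWord = ((0 : Fin 2), true) :: ((1 : Fin 2), !c) :: l) :
    ∃ l, (FreeGroup.mk [((0:Fin 2), true)] * (FreeGroup.mk [((1:Fin 2), c)] *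
        (FreeGroup.mk [((0:Fin 2), false)] * w))).toWord
      = ((0 : Fin 2), true) :: ((1 : Fin 2), c) :: l := by
  by_cases hc : ∃ l, w.toWord = ((0 : Fin 2), true) :: l
  · obtain ⟨l, hl⟩ := hc
    have h1 : (FreeGroup.mk [((0 : Fin 2), false)] * w).toWord = l :=
      cons_cancel (0, false) w l (by simpa using hl)
    have h2 : (FreeGroup.mk [((1 : Fin 2), c)] * (FreeGroup.mk [((0 : Fin 2), false)] * w)).toWord
        = (1, c) :: l := by
      have := cons_nocancel ((1 : Fin 2), c) (FreeGroup.mk [((0 : Fin 2), false)] * w)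
        (by intro l' hl'; rw [h1] at hl'; exact hw ⟨l', by rw [hl, hl']⟩)
      rw [h1] at this; exact this
    have h3 := cons_nocancel ((0 : Fin 2), true)
      (FreeGroup.mk [((1 : Fin 2), c)] * (FreeGroup.mk [((0 : Fin 2), false)] * w))
      (by intro l' hl'; rw [h2] at hl'; simp at hl')
    rw [h3, h2]
    exact ⟨l, rfl⟩
  · have h1 : (FreeGroup.mk [((0 : Fin 2), false)] * w).toWord = (0, false) :: w.toWord := by
      apply cons_nocancel
      intro l' hl'
      exact hc ⟨l', by simpa using hl'⟩
    have h2 : (FreeGroup.mk [((1 : Fin 2), c)] * (FreeGroup.mk [((0 : Fin 2), false)] * w)).toWord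
        = (1, c) :: (0, false) :: w.toWord := by
      have := cons_nocancel ((1 : Fin 2), c) (FreeGroup.mk [((0 : Fin 2), false)] * w)
        (by intro l' hl'; rw [h1] at hl'; simp at hl')
      rw [h1] at this; exact this
    have h3 := cons_nocancel ((0 : Fin 2), true)
      (FreeGroup.mk [((1 : Fin 2), c)] * (FreeGroup.mk [((0 : Fin 2), false)] * w))
      (by intro l' hl'; rw [h2] at hl'; simp at hl')
    rw [h3, h2]
    exact ⟨_, rfl⟩

lemma psi_injective : Function.Injective (FreeGroup.lift psf) := by
  apply FreeGroup.injective_lift_of_ping_pong psf XX YY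
  · -- nonempty
    intro i
    fin_cases i
    · exact ⟨FreeGroup.of 1, ⟨[], FreeGroup.toWord_of 1⟩⟩
    · refine ⟨FreeGroup.of 0 * FreeGroup.of 1, ⟨[], ?_⟩⟩
      show (FreeGroup.mk [((0:Fin 2), true)] * FreeGroup.of 1).toWord = _
      rw [cons_nocancel _ _ (by intro l hl; rw [FreeGroup.toWord_of] at hl; simp at hl)]
      rw [FreeGroup.toWord_of]
  · -- X pairwise disjoint
    intro i j hij
    fin_cases i <;> fin_cases j <;>
      first
      | exact absurd rfl hij
      | (show Disjoint _ _
         rw [Set.disjoint_left]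
         rintro x ⟨l, hl⟩ ⟨l', hl'⟩
         rw [hl] at hl'; simp at hl')
  · intro i j hij
    fin_cases i <;> fin_cases j <;>
      first
      | exact absurd rfl hij
      | (show Disjoint _ _
         rw [Set.disjoint_left]
         rintro x ⟨l, hl⟩ ⟨l', hl'⟩
         rw [hl] at hl'; simp at hl')
  · intro i j
    fin_cases i <;> fin_cases j <;>
      (show Disjoint _ _
       rw [Set.disjoint_left]
       rintro x ⟨l, hl⟩ ⟨l', hl'⟩
       rw [hl] at hl'; simp at hl')
  · -- hX
    intro i
    fin_cases i
    · rintro x ⟨w, hw, rfl⟩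
      have hw' : ¬ ∃ l, w.toWord = ((1:Fin 2), false) :: l := hw
      refine ⟨w.toWord, ?_⟩
      show (FreeGroup.mk [((1:Fin 2), true)] * w).toWord = _
      exact cons_nocancel _ _ (fun l hl => hw' ⟨l, by simpa using hl⟩)
    · rintro x ⟨w, hw, rfl⟩
      have hw' : ¬ ∃ l, w.toWord = ((0:Fin 2), true) :: ((1:Fin 2), false) :: l := hw
      show ∃ l, (FreeGroup.mk [((0:Fin 2), true), ((1:Fin 2), true), ((0:Fin 2), false)]
          * w).toWord = ((0:Fin 2), true) :: ((1:Fin 2), true) :: l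
      rw [triple_mul]
      exact triple_step true w (by simpa using hw')
  · -- hY
    intro i
    fin_cases i
    · rintro x ⟨w, hw, rfl⟩
      have hw' : ¬ ∃ l, w.toWord = ((1:Fin 2), true) :: l := hw
      refine ⟨w.toWord, ?_⟩
      show (FreeGroup.mk [((1:Fin 2), false)] * w).toWord = _
      exact cons_nocancel _ _ (fun l hl => hw' ⟨l, by simpa using hl⟩)
    · rintro x ⟨w, hw, rfl⟩
      have hw' : ¬ ∃ l, w.toWord = ((0:Fin 2), true) :: ((1:Fin 2), true) :: l := hw
      show ∃ l, (FreeGroup.mk [((0:Fin 2), true), ((1:Fin 2), false), ((0:Fin 2), false)]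
          * w).toWord = ((0:Fin 2), true) :: ((1:Fin 2), false) :: l
      rw [triple_mul]
      exact triple_step false w (by simpa using hw')
section HNNpart

abbrev psi : KK →* KK := FreeGroup.lift psf

noncomputable def phiEquiv : (⊤ : Subgroup KK) ≃* psi.range :=
  Subgroup.topEquiv.trans (MonoidHom.ofInjective psi_injective)

noncomputable abbrev Q := HNNExtension KK ⊤ psi.range phiEquiv

lemma Q_conj (x : KK) :
    (HNNExtension.t : Q) * HNNExtension.of x * (HNNExtension.t : Q)⁻¹
      = HNNExtension.of (psi x) := by
  have h := HNNExtension.equiv_eq_conj (φ := phiEquiv) ⟨x, trivial⟩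
  rw [← h]; congr 1

abbrev GG := PresentedGroup grels

noncomputable def fq : Fin 3 → Q :=
  ![HNNExtension.of (FreeGroup.of 0), HNNExtension.of (FreeGroup.of 1), HNNExtension.t⁻¹]

lemma fq_rels : ∀ r ∈ grels, FreeGroup.lift fq r = 1 := by
  intro r hr
  have e0 : psi (FreeGroup.of 0) = FreeGroup.of 1 := by simp [psi, psf]
  have e1 : psi (FreeGroup.of 1) = FreeGroup.of 0 * FreeGroup.of 1 * (FreeGroup.of 0)⁻¹ := by
    simp [psi, psf]
  rcases hr with rfl | rfl
  · simp only [map_mul, map_inv, FreeGroup.lift_apply_of]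
    have : fq 2 = HNNExtension.t⁻¹ := rfl
    rw [this, show fq 0 = HNNExtension.of (FreeGroup.of 0) from rfl,
      show fq 1 = HNNExtension.of (FreeGroup.of 1) from rfl, inv_inv]
    rw [show (HNNExtension.t : Q) * HNNExtension.of (FreeGroup.of 0) * HNNExtension.t⁻¹
          * (HNNExtension.of (FreeGroup.of 1))⁻¹
        = ((HNNExtension.t : Q) * HNNExtension.of (FreeGroup.of 0) * HNNExtension.t⁻¹)
          * (HNNExtension.of (FreeGroup.of 1))⁻¹ from by group]
    rw [Q_conj, e0]
    simp
  · simp only [map_mul, map_inv, FreeGroup.lift_apply_of]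
    have : fq 2 = HNNExtension.t⁻¹ := rfl
    rw [this, show fq 0 = HNNExtension.of (FreeGroup.of 0) from rfl,
      show fq 1 = HNNExtension.of (FreeGroup.of 1) from rfl, inv_inv]
    rw [show (HNNExtension.t : Q) * HNNExtension.of (FreeGroup.of 1) * HNNExtension.t⁻¹
          * (HNNExtension.of (FreeGroup.of 0) * HNNExtension.of (FreeGroup.of 1)
            * (HNNExtension.of (FreeGroup.of 0))⁻¹)⁻¹
        = ((HNNExtension.t : Q) * HNNExtension.of (FreeGroup.of 1) * HNNExtension.t⁻¹)
          * (HNNExtension.of (FreeGroup.of 0) * HNNExtension.of (FreeGroup.of 1)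
            * (HNNExtension.of (FreeGroup.of 0))⁻¹)⁻¹ from by group]
    rw [Q_conj, e1]
    simp [mul_assoc]

noncomputable def Phi : GG →* Q := PresentedGroup.toGroup fq_rels

noncomputable def pj : KK →* GG :=
  FreeGroup.lift ![PresentedGroup.of 0, PresentedGroup.of 1]

lemma Phi_comp_pj : Phi.comp pj = HNNExtension.of := by
  apply FreeGroup.ext_hom
  intro i
  fin_cases i
  · show Phi (pj (FreeGroup.of 0)) = _
    rw [show pj (FreeGroup.of 0) = PresentedGroup.of 0 from by simp [pj]]
    simp [Phi, PresentedGroup.toGroup.of]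
    rfl
  · show Phi (pj (FreeGroup.of 1)) = _
    rw [show pj (FreeGroup.of 1) = PresentedGroup.of 1 from by simp [pj]]
    simp [Phi, PresentedGroup.toGroup.of]
    rfl

lemma pj_injective : Function.Injective pj := by
  intro x y h
  have := congrArg Phi (h : pj x = pj y)
  rw [show Phi (pj x) = (Phi.comp pj) x from rfl, show Phi (pj y) = (Phi.comp pj) y from rfl,
    Phi_comp_pj] at this
  exact HNNExtension.of_injective (φ := phiEquiv) this

end HNNpart

section Main

noncomputable section

open Subgroup

def pa : GG := PresentedGroup.of (rels := grels) 0
def pb : GG := PresentedGroup.of (rels := grels) 1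
def tg : GG := PresentedGroup.of (rels := grels) 2

lemma mk_rel_one {r : FreeGroup (Fin 3)} (hr : r ∈ grels) : PresentedGroup.mk grels r = 1 :=
  (QuotientGroup.eq_one_iff r).mpr (Subgroup.subset_normalClosure hr)

lemma rel1 : tg⁻¹ * pa * tg = pb := by
  have h := mk_rel_one (Or.inl rfl)
  simp only [map_mul, map_inv] at h
  have h' : tg⁻¹ * pa * tg * pb⁻¹ = 1 := h
  have := mul_inv_eq_one.mp h'
  exact this

lemma rel2 : tg⁻¹ * pb * tg = pa * pb * pa⁻¹ := by
  have h := mk_rel_one (Or.inr rfl)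
  simp only [map_mul, map_inv] at h
  have h' : tg⁻¹ * pb * tg * (pa * pb * pa⁻¹)⁻¹ = 1 := h
  exact mul_inv_eq_one.mp h'

lemma conj1 : tg * pb * tg⁻¹ = pa := by
  rw [← rel1]; group

lemma conj2 : tg * (pa * pb * pa⁻¹) * tg⁻¹ = pb := by
  rw [← rel2]; group

/-- conjugates of the generators -/
def an (n : ℕ) : GG := tg ^ n * pa * (tg ^ n)⁻¹
def bn (n : ℕ) : GG := tg ^ n * pb * (tg ^ n)⁻¹

lemma ida (n : ℕ) : an n = bn (n + 1) := by
  unfold an bn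
  rw [← conj1]
  group

lemma idb (n : ℕ) : bn n = an (n + 1) * bn (n + 1) * (an (n + 1))⁻¹ := by
  unfold an bn
  conv_lhs => rw [← conj2]
  group

def U : Set GG := ⋃ n, {an n, bn n}

/-- The locally free, non-free subgroup. -/
def HH : Subgroup GG := Subgroup.closure U

def F0 : Subgroup GG := pj.range

lemma F0_eq : F0 = Subgroup.closure {pa, pb} := by
  unfold F0 pj
  rw [FreeGroup.range_lift_eq_closure]
  congr 1
  ext x
  constructor
  · rintro ⟨i, rfl⟩
    fin_cases i
    · exact Or.inl rfl
    · exact Or.inr rfl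
  · rintro (rfl | rfl)
    · exact ⟨0, rfl⟩
    · exact ⟨1, rfl⟩

def conjHom (n : ℕ) : GG →* GG := (MulAut.conj (tg ^ n)).toMonoidHom

def FF (n : ℕ) : Subgroup GG := F0.map (conjHom n)

lemma FF_eq (n : ℕ) : FF n = Subgroup.closure {an n, bn n} := by
  unfold FF
  rw [F0_eq, MonoidHom.map_closure]
  congr 1
  rw [Set.image_insert_eq, Set.image_singleton]
  rfl

lemma pa_mem_F0 : pa ∈ F0 := by rw [F0_eq]; exact subset_closure (Or.inl rfl)
lemma pb_mem_F0 : pb ∈ F0 := by rw [F0_eq]; exact subset_closure (Or.inr rfl)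

lemma FF_mono : Monotone FF := by
  apply monotone_nat_of_le_succ
  intro n
  rw [FF_eq n, Subgroup.closure_le, FF_eq (n+1)]
  rintro x (rfl | rfl)
  · rw [ida n]; exact subset_closure (Or.inr rfl)
  · rw [idb n]
    have ha : an (n+1) ∈ closure {an (n+1), bn (n+1)} := subset_closure (Or.inl rfl)
    have hb : bn (n+1) ∈ closure {an (n+1), bn (n+1)} := subset_closure (Or.inr rfl)
    exact mul_mem (mul_mem ha hb) (inv_mem ha)

lemma HH_eq_iSup : HH = ⨆ n, FF n := by
  unfold HH U
  rw [Subgroup.closure_iUnion]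
  congr 1
  ext n
  rw [FF_eq]

lemma an_mem (n : ℕ) : an n ∈ HH := subset_closure (Set.mem_iUnion.mpr ⟨n, Or.inl rfl⟩)
lemma bn_mem (n : ℕ) : bn n ∈ HH := subset_closure (Set.mem_iUnion.mpr ⟨n, Or.inr rfl⟩)

lemma pa_mem : pa ∈ HH := by
  have := an_mem 0
  simpa [an] using this

lemma pb_mem : pb ∈ HH := by
  have := bn_mem 0
  simpa [bn] using this

def e0 : KK ≃* F0 := MonoidHom.ofInjective pj_injective

def eFF (n : ℕ) : F0 ≃* FF n :=
  Subgroup.equivMapOfInjective F0 (conjHom n) (MulAut.conj (tg ^ n)).injective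

instance FF_free (n : ℕ) : IsFreeGroup (FF n) :=
  IsFreeGroup.ofMulEquiv (e0.trans (eFF n))

lemma pa_ne_comm : pa * pb ≠ pb * pa := by
  intro h
  have h0 : pj (FreeGroup.of 0) = pa := by simp [pj]; rfl
  have h1 : pj (FreeGroup.of 1) = pb := by simp [pj]; rfl
  have : pj (FreeGroup.of 0 * FreeGroup.of 1) = pj (FreeGroup.of 1 * FreeGroup.of 0) := by
    simp only [map_mul, h0, h1, h]
  have h2 := pj_injective this
  have h3 := congrArg FreeGroup.toWord h2
  rw [show ((FreeGroup.of 0 * FreeGroup.of 1 : KK)).toWord = [(0, true), (1, true)] from rfl,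
    show ((FreeGroup.of 1 * FreeGroup.of 0 : KK)).toWord = [(1, true), (0, true)] from rfl] at h3
  simp at h3

lemma freeGroup_commute {ι : Type*} [Subsingleton ι] (x y : FreeGroup ι) : Commute x y := by
  have base : ∀ i : ι, ∀ w : FreeGroup ι, Commute (FreeGroup.of i) w := by
    intro i w
    refine FreeGroup.induction_on w (Commute.one_right _) ?_ ?_ ?_
    · intro j
      rw [Subsingleton.elim i j]
    · intro j h; exact h.inv_right
    · intro u v hu hv; exact hu.mul_right hv
  refine FreeGroup.induction_on x (Commute.one_left _) (fun i => base i y)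
    (fun i h => h.inv_left) (fun u v hu hv => hu.mul_left hv)

end

end Main

noncomputable section FinalProof

open Subgroup

lemma locally_free : ∀ K : Subgroup HH, K.FG → IsFreeGroup K := by
  intro Ksub hKfg
  obtain ⟨T, hT⟩ := hKfg
  -- every element of HH lies in some FF n
  have hall : ∀ y : HH, ∃ n, (y : GG) ∈ FF n := by
    intro y
    have hy : (y : GG) ∈ ⨆ n, FF n := by
      rw [← HH_eq_iSup]; exact y.2
    exact (Subgroup.mem_iSup_of_directed FF_mono.directed_le).mp hy
  choose nf hnf using hall
  set N := T.sup nf with hN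
  have hTN : ∀ y ∈ T, (y : GG) ∈ FF N := fun y hy => FF_mono (Finset.le_sup hy) (hnf y)
  set L : Subgroup GG := Ksub.map HH.subtype with hLdef
  have hL : L = Subgroup.closure (HH.subtype '' (T : Set HH)) := by
    rw [hLdef, ← hT, MonoidHom.map_closure]
  have hLE : L ≤ FF N := by
    rw [hL, Subgroup.closure_le]
    rintro x ⟨y, hy, rfl⟩
    exact hTN y hy
  have e1 : Ksub ≃* L := Subgroup.equivMapOfInjective Ksub HH.subtype HH.subtype_injective
  have e2 : (L.subgroupOf (FF N)) ≃* L := Subgroup.subgroupOfEquivOfLe hLE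
  exact IsFreeGroup.ofMulEquiv (e2.trans e1.symm)

lemma not_free : ¬ IsFreeGroup HH := by
  intro hfree
  by_cases hss : ∀ s t : IsFreeGroup.Generators HH, s = t
  · haveI : Subsingleton (IsFreeGroup.Generators HH) := ⟨hss⟩
    have hcomm : ∀ x y : HH, Commute x y := by
      intro x y
      have h := freeGroup_commute (IsFreeGroup.toFreeGroup (G := HH) x)
        (IsFreeGroup.toFreeGroup (G := HH) y)
      have h2 : IsFreeGroup.toFreeGroup (G := HH) (x * y)
          = IsFreeGroup.toFreeGroup (G := HH) (y * x) := by
        rw [map_mul, map_mul]; exact h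
      exact (IsFreeGroup.toFreeGroup (G := HH)).injective h2
    have := hcomm ⟨pa, pa_mem⟩ ⟨pb, pb_mem⟩
    exact pa_ne_comm (congrArg Subtype.val this)
  · push_neg at hss
    obtain ⟨s₁, s₂, hne⟩ := hss
    classical
    set Z := Multiplicative ℤ × Multiplicative ℤ with hZ
    set g : IsFreeGroup.Generators HH → Z := fun s =>
      if s = s₁ then (Multiplicative.ofAdd (1 : ℤ), 1)
      else if s = s₂ then (1, Multiplicative.ofAdd (1 : ℤ)) else 1 with hg
    set f : HH →* Z := IsFreeGroup.lift g with hf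
    set z : Z := f ⟨bn 0, bn_mem 0⟩ with hz
    have hb : ∀ n, f ⟨bn n, bn_mem n⟩ = z := by
      intro n
      induction n with
      | zero => exact hz.symm
      | succ n ih =>
        have key : (⟨bn n, bn_mem n⟩ : HH)
            = ⟨an (n+1), an_mem _⟩ * ⟨bn (n+1), bn_mem _⟩ * (⟨an (n+1), an_mem _⟩)⁻¹ :=
          Subtype.ext (idb n)
        have hcg := congrArg f key
        rw [map_mul, map_mul, map_inv,
          mul_comm (f ⟨an (n+1), an_mem _⟩) (f ⟨bn (n+1), bn_mem _⟩),
          mul_inv_cancel_right] at hcg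
        rw [← hcg]
        exact ih
    have ha : ∀ n, f ⟨an n, an_mem n⟩ = z := by
      intro n
      have key : (⟨an n, an_mem n⟩ : HH) = ⟨bn (n+1), bn_mem _⟩ := Subtype.ext (ida n)
      rw [key, hb]
    have claim : ∀ x (hx : x ∈ HH), f ⟨x, hx⟩ ∈ Subgroup.zpowers z := by
      intro x hx
      refine Subgroup.closure_induction
        (p := fun y hy => f ⟨y, hy⟩ ∈ Subgroup.zpowers z) ?_ ?_ ?_ ?_ hx
      · intro y hy
        obtain ⟨n, hn⟩ := Set.mem_iUnion.mp hy
        rcases hn with rfl | rfl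
        · show f ⟨an n, an_mem n⟩ ∈ Subgroup.zpowers z
          rw [ha n]
          exact Subgroup.mem_zpowers z
        · show f ⟨bn n, bn_mem n⟩ ∈ Subgroup.zpowers z
          rw [hb n]
          exact Subgroup.mem_zpowers z
      · show f 1 ∈ Subgroup.zpowers z
        rw [map_one]
        exact one_mem _
      · intro u v hu hv pu pv
        show f (⟨u, hu⟩ * ⟨v, hv⟩) ∈ Subgroup.zpowers z
        rw [map_mul]
        exact mul_mem pu pv
      · intro u hu pu
        show f (⟨u, hu⟩)⁻¹ ∈ Subgroup.zpowers z
        rw [map_inv]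
        exact inv_mem pu
    have h1 : f (IsFreeGroup.of s₁) = (Multiplicative.ofAdd (1 : ℤ), 1) := by
      rw [hf, IsFreeGroup.lift_of, hg]
      simp
    have h2 : f (IsFreeGroup.of s₂) = (1, Multiplicative.ofAdd (1 : ℤ)) := by
      rw [hf, IsFreeGroup.lift_of, hg]
      simp [Ne.symm hne]
    have m1 : (Multiplicative.ofAdd (1 : ℤ), (1 : Multiplicative ℤ)) ∈ Subgroup.zpowers z := by
      rw [← h1]
      exact claim _ (IsFreeGroup.of s₁ : HH).2
    have m2 : ((1 : Multiplicative ℤ), Multiplicative.ofAdd (1 : ℤ)) ∈ Subgroup.zpowers z := by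
      rw [← h2]
      exact claim _ (IsFreeGroup.of s₂ : HH).2
    obtain ⟨m, hm⟩ := m1
    obtain ⟨k, hk⟩ := m2
    obtain ⟨z1, z2⟩ := z
    have hm1 : z1 ^ m = Multiplicative.ofAdd (1 : ℤ) := congrArg Prod.fst hm
    have hk1 : z1 ^ k = 1 := congrArg Prod.fst hk
    have hk2 : z2 ^ k = Multiplicative.ofAdd (1 : ℤ) := congrArg Prod.snd hk
    have e1 : m * z1.toAdd = 1 := by
      have := congrArg Multiplicative.toAdd hm1
      rwa [toAdd_zpow, zsmul_eq_mul] at this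
    have e2 : k * z1.toAdd = 0 := by
      have := congrArg Multiplicative.toAdd hk1
      rwa [toAdd_zpow, zsmul_eq_mul] at this
    have e3 : k * z2.toAdd = 1 := by
      have := congrArg Multiplicative.toAdd hk2
      rwa [toAdd_zpow, zsmul_eq_mul] at this
    have hp : z1.toAdd ≠ 0 := by
      intro h0
      rw [h0, mul_zero] at e1
      exact one_ne_zero e1.symm
    rcases mul_eq_zero.mp e2 with hk0 | hp0
    · rw [hk0, zero_mul] at e3
      exact one_ne_zero e3.symm
    · exact hp hp0

end FinalProof

theorem stmt_10 :
    ∃ H : Subgroup (PresentedGroup grels),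
      (∀ K : Subgroup H, K.FG → IsFreeGroup K) ∧ ¬ IsFreeGroup H := by
  exact ⟨HH, locally_free, not_free⟩
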